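/- The function q is even, i.e. q(-s) = q(s) for all s ∈ ℝ. -/

import Mathlib

open MeasureTheory Filter Real Set

theorem stmt_1 (a μ A : ℝ) (ha : 0 < a) (hμ : 1 / 3 < μ) (hA : 0 < A)
    (q : ℝ → ℝ) (hq : ContDiff ℝ 2 q)
    (hode : ∀ s : ℝ, deriv (deriv q) s * q s + a * s * deriv q s * q s
      + μ * q s + (1 / 3) * s * deriv q s = 0)
    (hq0 : q 0 = A) (hq0' : deriv q 0 = 0)
    (hpos : ∀ s : ℝ, 0 < q s) :
    ∀ s : ℝ, q (-s) = q s := by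
  -- basic differentiability facts
  have hq2 : ContDiff ℝ (1 + 1 : ℕ) q := by exact_mod_cast hq
  have hq' : ContDiff ℝ 1 (deriv q) := (contDiff_succ_iff_deriv.mp hq2).2.2
  have hdq : ∀ s : ℝ, HasDerivAt q (deriv q s) s :=
    fun s => ((hq2.differentiable (by norm_num)) s).hasDerivAt
  have hdq' : ∀ s : ℝ, HasDerivAt (deriv q) (deriv (deriv q) s) s :=
    fun s => ((hq'.differentiable one_ne_zero) s).hasDerivAt
  intro s₀
  set T : ℝ := |s₀| + 1 with hT
  have hT0 : 0 < T := by positivity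
  have hs₀mem : s₀ ∈ Ioo (-T) T := by
    constructor <;> [nlinarith [abs_nonneg s₀, neg_abs_le s₀]; nlinarith [le_abs_self s₀]]
  -- bounds for q and deriv q on [-T, T]
  obtain ⟨sm, hsmmem, hsmmin⟩ := isCompact_Icc.exists_isMinOn (nonempty_Icc.mpr (by linarith))
    (hq.continuous.continuousOn (s := Icc (-T) T))
  set m : ℝ := q sm with hm
  have hm0 : 0 < m := hpos sm
  obtain ⟨M, hM⟩ := isCompact_Icc.exists_bound_of_continuousOn
    (hq.continuous.continuousOn (s := Icc (-T) T))
  obtain ⟨M', hM'⟩ := isCompact_Icc.exists_bound_of_continuousOn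
    (hq'.continuous.continuousOn (s := Icc (-T) T))
  -- the state set and the time-state set
  set S : Set (ℝ × ℝ) := Icc m M ×ˢ Icc (-M') M' with hS
  set U : Set (ℝ × ℝ × ℝ) := Icc (-T) T ×ˢ S with hU
  set O : Set (ℝ × ℝ × ℝ) := {p | 0 < p.2.1} with hO
  have hOopen : IsOpen O := isOpen_lt continuous_const (continuous_fst.comp continuous_snd)
  have hUO : U ⊆ O := fun p hp => lt_of_lt_of_le hm0 hp.2.1.1
  -- the vector field
  set G : ℝ × ℝ × ℝ → ℝ × ℝ :=
    fun p => (p.2.2, -(a * p.1 * p.2.2) - μ - (1/3) * p.1 * p.2.2 / p.2.1) with hG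
  have hGsm : ContDiffOn ℝ 1 G O := by
    apply ContDiffOn.prodMk
    · exact (contDiff_snd.comp contDiff_snd).contDiffOn
    · refine ContDiffOn.sub (ContDiffOn.sub ?_ contDiffOn_const) ?_
      · exact (((contDiff_const.mul contDiff_fst).mul
          (contDiff_snd.comp contDiff_snd)).neg).contDiffOn
      · refine ContDiffOn.div ?_ ?_ (fun p hp => ne_of_gt hp)
        · exact ((contDiff_const.mul contDiff_fst).mul
            (contDiff_snd.comp contDiff_snd)).contDiffOn
        · exact (contDiff_fst.comp contDiff_snd).contDiffOn
  -- Lipschitz bound on U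
  have hUc : IsCompact U := (isCompact_Icc.prod (isCompact_Icc.prod isCompact_Icc))
  have hUconv : Convex ℝ U := (convex_Icc _ _).prod ((convex_Icc _ _).prod (convex_Icc _ _))
  have hfd : ContinuousOn (fderiv ℝ G) O := hGsm.continuousOn_fderiv_of_isOpen hOopen le_rfl
  obtain ⟨C, hC⟩ := hUc.exists_bound_of_continuousOn (hfd.mono hUO)
  have h0mem : ((0:ℝ), ((q 0 : ℝ), (0:ℝ))) ∈ U := by
    have h1 := hM 0 ⟨by linarith, by linarith⟩
    have h2 := hM' 0 ⟨by linarith, by linarith⟩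
    rw [Real.norm_eq_abs] at h1 h2
    rw [hq0', abs_zero] at h2
    simp only [hU, hS, Set.mem_prod, Set.mem_Icc]
    exact ⟨⟨by linarith, by linarith⟩,
      ⟨hsmmin ⟨by linarith, by linarith⟩, (abs_le.mp h1).2⟩, by linarith, h2⟩
  have hC0 : 0 ≤ C := le_trans (norm_nonneg _) (hC _ h0mem)
  set K : NNReal := ⟨C, hC0⟩ with hK
  have hdiffU : ∀ p ∈ U, DifferentiableAt ℝ G p :=
    fun p hp => (hGsm.differentiableOn one_ne_zero).differentiableAt (hOopen.mem_nhds (hUO hp))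
  have hLip : LipschitzOnWith K G U := by
    apply hUconv.lipschitzOnWith_of_nnnorm_fderiv_le hdiffU
    intro p hp
    rw [← NNReal.coe_le_coe]
    exact hC p hp
  -- the time-clamped vector field and its Lipschitz property
  set v : ℝ → ℝ × ℝ → ℝ × ℝ := fun t x => G (max (-T) (min T t), x) with hv
  have hclamp : ∀ t : ℝ, max (-T) (min T t) ∈ Icc (-T) T :=
    fun t => ⟨le_max_left _ _, max_le (by linarith) (min_le_left _ _)⟩
  have hvLip : ∀ t, LipschitzOnWith K (v t) S := by
    intro t x hx y hy
    have h1 := hLip (x := (max (-T) (min T t), x)) (y := (max (-T) (min T t), y))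
      ⟨hclamp t, hx⟩ ⟨hclamp t, hy⟩
    calc edist (v t x) (v t y) ≤ K * edist ((max (-T) (min T t), x) : ℝ × ℝ × ℝ)
          (max (-T) (min T t), y) := h1
      _ = K * edist x y := by rw [Prod.edist_eq]; simp
  have hclamp_eq : ∀ t ∈ Ioo (-T) T, max (-T) (min T t) = t := by
    intro t ht
    rw [min_eq_right ht.2.le, max_eq_right ht.1.le]
  -- the two solutions
  set f : ℝ → ℝ × ℝ := fun t => (q t, deriv q t) with hf
  set g : ℝ → ℝ × ℝ := fun t => (q (-t), -deriv q (-t)) with hgdef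
  have hmemIcc : ∀ t ∈ Ioo (-T) T, t ∈ Icc (-T) T := fun t ht => Ioo_subset_Icc_self ht
  have hmemS : ∀ t, t ∈ Icc (-T) T → (q t, deriv q t) ∈ S := by
    intro t ht
    have h1 := hM t ht
    have h2 := hM' t ht
    rw [Real.norm_eq_abs] at h1 h2
    exact ⟨⟨hsmmin ht, (abs_le.mp h1).2⟩, abs_le.mp h2⟩
  have hfsol : ∀ t ∈ Ioo (-T) T, HasDerivAt f (v t (f t)) t ∧ f t ∈ S := by
    intro t ht
    refine ⟨?_, hmemS t (hmemIcc t ht)⟩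
    have hD : HasDerivAt f (deriv q t, deriv (deriv q) t) t := (hdq t).prodMk (hdq' t)
    have heq : v t (f t) = (deriv q t, deriv (deriv q) t) := by
      simp only [hv, hG, hf, hclamp_eq t ht]
      refine Prod.ext rfl ?_
      have h0 := hode t
      have hqt := (hpos t).ne'
      field_simp
      nlinarith [hode t, hpos t]
    rw [heq]; exact hD
  have hgsol : ∀ t ∈ Ioo (-T) T, HasDerivAt g (v t (g t)) t ∧ g t ∈ S := by
    intro t ht
    have htmem : -t ∈ Icc (-T) T := by
      constructor <;> [linarith [ht.2]; linarith [ht.1]]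
    refine ⟨?_, ?_⟩
    · have hD1 : HasDerivAt (fun t : ℝ => q (-t)) (-deriv q (-t)) t := by
        have := (hdq (-t)).comp t (hasDerivAt_neg t)
        simpa [Function.comp_def] using this
      have hD2 : HasDerivAt (fun t : ℝ => -deriv q (-t)) (deriv (deriv q) (-t)) t := by
        have := ((hdq' (-t)).comp t (hasDerivAt_neg t)).neg
        simpa [Function.comp_def, Pi.neg_def] using this
      have hD : HasDerivAt g (-deriv q (-t), deriv (deriv q) (-t)) t := hD1.prodMk hD2
      have heq : v t (g t) = (-deriv q (-t), deriv (deriv q) (-t)) := by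
        simp only [hv, hG, hgdef, hclamp_eq t ht]
        refine Prod.ext rfl ?_
        have h0 := hode (-t)
        have hqt := (hpos (-t)).ne'
        field_simp
        nlinarith [hode (-t), hpos (-t)]
      rw [heq]; exact hD
    · have h2 := hmemS (-t) htmem
      have h3 := Set.mem_Icc.mp h2.2
      simp only [hgdef]
      norm_num at h3
      exact ⟨h2.1, Set.mem_Icc.mpr ⟨by norm_num; linarith,
        by norm_num; linarith⟩⟩
  have heq0 : f 0 = g 0 := by
    simp [hf, hgdef, hq0']
  have key := ODE_solution_unique_of_mem_Ioo (v := v) (s := fun _ => S) (K := K)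
    (fun t _ => hvLip t) (t₀ := (0:ℝ)) ⟨by linarith, hT0⟩ hfsol hgsol heq0
  have := key hs₀mem
  have h1 : q s₀ = q (-s₀) := congrArg Prod.fst this
  exact h1.symm
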